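/- Suppose k is algebraically closed of characteristic 0. The zero locus Z = {(A,f) ∈ gl_n(k) × V* : P(A,f) = 0}, viewed as an affine algebraic set in affine space of dimension n² + n, is irreducible; equivalently, the vanishing ideal of Z in the polynomial ring in the entries of A and f is a prime ideal. -/

import Mathlib

open Matrix

noncomputable def PP {R : Type*} [CommRing R] {n : ℕ} (A : Matrix (Fin n) (Fin n) R)
    (f : Fin n → R) : R :=
  Matrix.det (Matrix.of fun i j : Fin n => vecMul f (A ^ (i : ℕ)) j)

namespace Stmt12

variable {K : Type*} [Field K] {n : ℕ}

lemma map_PP {R S : Type*} [CommRing R] [CommRing S] (h : R →+* S)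
    (A : Matrix (Fin n) (Fin n) R) (f : Fin n → R) :
    h (PP A f) = PP (A.map h) (h ∘ f) := by
  unfold PP
  rw [RingHom.map_det]
  congr 1
  have hmap : ∀ k : ℕ, (A ^ k).map h = (A.map h) ^ k := by
    intro k
    have := map_pow (h.mapMatrix (m := Fin n)) A k
    simpa [RingHom.mapMatrix_apply] using this
  ext i j
  simp only [RingHom.mapMatrix_apply, Matrix.map_apply, Matrix.of_apply]
  rw [RingHom.map_vecMul, hmap]

lemma pp_zero_of_eigen (A : Matrix (Fin n) (Fin n) K) (f : Fin n → K)
    (w : Fin n → K) (hw : w ≠ 0) (μ : K)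
    (hAw : A *ᵥ w = μ • w) (hfw : f ⬝ᵥ w = 0) : PP A f = 0 := by
  unfold PP
  rw [← Matrix.exists_mulVec_eq_zero_iff]
  refine ⟨w, hw, ?_⟩
  have hpow : ∀ k : ℕ, A ^ k *ᵥ w = μ ^ k • w := by
    intro k
    induction k with
    | zero => simp
    | succ k ih =>
      rw [pow_succ, ← Matrix.mulVec_mulVec, hAw, Matrix.mulVec_smul, ih, smul_smul,
        ← pow_succ']
  funext i
  calc ((Matrix.of fun i j : Fin n => vecMul f (A ^ (i : ℕ)) j) *ᵥ w) i
      = (f ᵥ* A ^ (i : ℕ)) ⬝ᵥ w := rfl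
    _ = f ⬝ᵥ (A ^ (i : ℕ) *ᵥ w) := (Matrix.dotProduct_mulVec f _ w).symm
    _ = 0 := by rw [hpow, dotProduct_smul, hfw, smul_zero]

lemma exists_eigen_of_pp_zero [IsAlgClosed K] (hn : 1 ≤ n)
    (A : Matrix (Fin n) (Fin n) K) (f : Fin n → K) (h : PP A f = 0) :
    ∃ w : Fin n → K, w ≠ 0 ∧ ∃ μ : K, A *ᵥ w = μ • w ∧ f ⬝ᵥ w = 0 := by
  obtain ⟨v, hv, hMv⟩ := (Matrix.exists_mulVec_eq_zero_iff).mpr h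
  have hfi : ∀ i : Fin n, f ⬝ᵥ (A ^ (i : ℕ) *ᵥ v) = 0 := by
    intro i
    rw [Matrix.dotProduct_mulVec]
    exact congrFun hMv i
  set S : Submodule K (Fin n → K) :=
    Submodule.span K (Set.range fun i : Fin n => A ^ (i : ℕ) *ᵥ v) with hS
  -- A^n *ᵥ v ∈ S via Cayley–Hamilton
  have hsum : ∀ (c : ℕ → K) (m : ℕ),
      (∑ k ∈ Finset.range m, c k • A ^ k) *ᵥ v = ∑ k ∈ Finset.range m, c k • (A ^ k *ᵥ v) := by
    intro c m
    induction m with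
    | zero => simp
    | succ m ih =>
      rw [Finset.sum_range_succ, Finset.sum_range_succ, Matrix.add_mulVec, ih,
        Matrix.smul_mulVec]
  have hmemlow : ∀ k : ℕ, k < n → A ^ k *ᵥ v ∈ S := by
    intro k hk
    exact Submodule.subset_span ⟨⟨k, hk⟩, rfl⟩
  have hAn : A ^ n *ᵥ v ∈ S := by
    have hp : Polynomial.aeval A A.charpoly = 0 := Matrix.aeval_self_charpoly A
    have hmonic := A.charpoly_monic
    have hdeg : A.charpoly.degree = (n : ℕ) := by simpa using A.charpoly_degree_eq_dim
    set r : Polynomial K := A.charpoly - Polynomial.X ^ n with hr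
    have hrdeg : r.natDegree < n := by
      rcases eq_or_ne r 0 with h0 | h0
      · rw [h0, Polynomial.natDegree_zero]; exact hn
      · have : r.degree < (n : ℕ) := by
          have h1 : A.charpoly.degree = (Polynomial.X ^ n : Polynomial K).degree := by
            rw [hdeg, Polynomial.degree_X_pow]
          have h2 : A.charpoly.leadingCoeff = (Polynomial.X ^ n : Polynomial K).leadingCoeff := by
            rw [hmonic.leadingCoeff, Polynomial.leadingCoeff_X_pow]
          have := Polynomial.degree_sub_lt h1 hmonic.ne_zero h2
          rwa [hdeg] at this
        exact (Polynomial.natDegree_lt_iff_degree_lt h0).mpr this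
    have hAnr : A ^ n = -(Polynomial.aeval A r) := by
      have : Polynomial.aeval A ((Polynomial.X : Polynomial K) ^ n) + Polynomial.aeval A r = 0 := by
        rw [← map_add, hr]; simp [hp]
      have h2 : A ^ n + Polynomial.aeval A r = 0 := by simpa using this
      linear_combination (norm := abel) h2
    rw [hAnr]
    have : Polynomial.aeval A r = ∑ k ∈ Finset.range n, r.coeff k • A ^ k :=
      Polynomial.aeval_eq_sum_range' hrdeg A
    rw [this, Matrix.neg_mulVec, hsum]
    exact Submodule.neg_mem _ (Submodule.sum_mem _ fun k hk =>
      Submodule.smul_mem _ _ (hmemlow k (Finset.mem_range.mp hk)))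
  have hinv : ∀ x ∈ S, A *ᵥ x ∈ S := by
    intro x hx
    induction hx using Submodule.span_induction with
    | mem x hx =>
      obtain ⟨i, rfl⟩ := hx
      rw [Matrix.mulVec_mulVec, ← pow_succ']
      rcases lt_or_eq_of_le (Nat.succ_le_of_lt i.isLt) with h' | h'
      · exact hmemlow _ h'
      · rw [show (i : ℕ) + 1 = n from h']; exact hAn
    | zero => simp [Submodule.zero_mem]
    | add x y _ _ hx hy => rw [Matrix.mulVec_add]; exact Submodule.add_mem _ hx hy
    | smul c x _ hx => rw [Matrix.mulVec_smul]; exact Submodule.smul_mem _ _ hx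
  have hfS : ∀ x ∈ S, f ⬝ᵥ x = 0 := by
    intro x hx
    induction hx using Submodule.span_induction with
    | mem x hx => obtain ⟨i, rfl⟩ := hx; exact hfi i
    | zero => simp
    | add x y _ _ hx hy => rw [dotProduct_add, hx, hy, add_zero]
    | smul c x _ hx => rw [dotProduct_smul, hx, smul_zero]
  have hvS : v ∈ S := by
    have := hmemlow 0 hn
    simpa using this
  haveI : Nontrivial S := nontrivial_of_ne ⟨v, hvS⟩ 0 (by
    simp only [ne_eq, Submodule.mk_eq_zero]; exact hv)
  set L : S →ₗ[K] S := (Matrix.mulVecLin A).restrict (p := S) (q := S) (by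
    intro x hx; simpa using hinv x hx)
  obtain ⟨μ, hμ⟩ := Module.End.exists_eigenvalue L
  obtain ⟨w', hw'⟩ := hμ.exists_hasEigenvector
  refine ⟨(w' : Fin n → K), ?_, μ, ?_, hfS _ w'.2⟩
  · intro h0
    exact hw'.right (Subtype.ext h0)
  · have := hw'.apply_eq_smul
    have h2 : ((L w' : S) : Fin n → K) = ((μ • w' : S) : Fin n → K) := by rw [this]
    simpa [L, LinearMap.restrict_apply] using h2

lemma exists_unit_col [NeZero n] (w : Fin n → K) (hw : w ≠ 0) :
    ∃ h : Matrix (Fin n) (Fin n) K, IsUnit h.det ∧ (fun i => h i 0) = w := by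
  obtain ⟨i₀, hi₀⟩ : ∃ i, w i ≠ 0 := by
    by_contra hc
    push_neg at hc
    exact hw (funext hc)
  set e : Fin n ≃ Fin n := Equiv.swap 0 i₀ with he
  set h : Matrix (Fin n) (Fin n) K :=
    Matrix.of (fun i j => if j = 0 then w i else if i = e j then 1 else 0) with hh
  refine ⟨h, ?_, funext fun i => by simp [hh]⟩
  rw [isUnit_iff_ne_zero]
  intro hdet
  obtain ⟨v, hv, hmv⟩ := Matrix.exists_mulVec_eq_zero_iff.mpr hdet
  have hv0 : v 0 = 0 := by
    have hrow := congrFun hmv i₀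
    have : ∑ j, h i₀ j * v j = 0 := hrow
    rw [Finset.sum_eq_single 0] at this
    · have : w i₀ * v 0 = 0 := by simpa [hh] using this
      rcases mul_eq_zero.mp this with h' | h'
      · exact absurd h' hi₀
      · exact h'
    · intro j _ hj
      have hne : i₀ ≠ e j := by
        intro hcon
        apply hj
        have : e i₀ = e (e j) := congrArg e hcon
        simpa [he, Equiv.swap_apply_right] using this.symm
      simp [hh, hj, hne]
    · intro hmem; exact absurd (Finset.mem_univ 0) hmem
  have hvj : ∀ j : Fin n, j ≠ 0 → v j = 0 := by
    intro j₀ hj₀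
    have hrow := congrFun hmv (e j₀)
    have hsum : ∑ j, h (e j₀) j * v j = 0 := hrow
    rw [Finset.sum_eq_single j₀] at hsum
    · simpa [hh, hj₀] using hsum
    · intro j _ hj
      rcases eq_or_ne j 0 with rfl | hne
      · simp [hh, hv0]
      · have : e j₀ ≠ e j := fun hcon => hj (e.injective hcon).symm
        simp [hh, hne, this]
    · intro hmem; exact absurd (Finset.mem_univ j₀) hmem
  exact hv (funext fun j => by rcases eq_or_ne j 0 with rfl | hj; exacts [hv0, hvj j hj])

variable (n) in
/-- zero out the below-diagonal part of the first column -/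
def zmat {R : Type*} [CommRing R] [NeZero n] (B : Matrix (Fin n) (Fin n) R) :
    Matrix (Fin n) (Fin n) R :=
  Matrix.of fun i j => if j = 0 ∧ i ≠ 0 then 0 else B i j

variable (n) in
def zvec {R : Type*} [CommRing R] [NeZero n] (c : Fin n → R) : Fin n → R :=
  fun i => if i = 0 then 0 else c i

variable (n) in
def phiA {R : Type*} [CommRing R] [NeZero n] (g B : Matrix (Fin n) (Fin n) R) :
    Matrix (Fin n) (Fin n) R :=
  adjugate g * zmat n B * g

variable (n) in
def phiF {R : Type*} [CommRing R] [NeZero n] (g : Matrix (Fin n) (Fin n) R)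
    (c : Fin n → R) : Fin n → R :=
  zvec n c ᵥ* g

lemma map_phiA {R S : Type*} [CommRing R] [CommRing S] [NeZero n] (h : R →+* S)
    (g B : Matrix (Fin n) (Fin n) R) :
    (phiA n g B).map h = phiA n (g.map h) (B.map h) := by
  unfold phiA
  have hadj : g.adjugate.map h = (g.map h).adjugate := by
    have := RingHom.map_adjugate h g
    simpa [RingHom.mapMatrix_apply] using this
  rw [Matrix.map_mul, Matrix.map_mul, hadj]
  congr 2
  ext i j
  simp only [zmat, Matrix.map_apply, Matrix.of_apply, apply_ite, map_zero]
  split_ifs <;> simp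

lemma map_phiF {R S : Type*} [CommRing R] [CommRing S] [NeZero n] (h : R →+* S)
    (g : Matrix (Fin n) (Fin n) R) (c : Fin n → R) (i : Fin n) :
    h (phiF n g c i) = phiF n (g.map h) (h ∘ c) i := by
  unfold phiF
  rw [RingHom.map_vecMul]
  congr 1
  funext j
  simp only [zvec, Function.comp_apply, apply_ite, map_zero]
  split_ifs <;> simp

lemma adjugate_eq_det_smul_inv (g : Matrix (Fin n) (Fin n) K) (hg : IsUnit g.det) :
    adjugate g = g.det • g⁻¹ := by
  rw [Matrix.inv_def, smul_smul, Ring.inverse_eq_inv', mul_inv_cancel₀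
    (isUnit_iff_ne_zero.mp hg), one_smul]

lemma pp_phi_zero_of_unit [NeZero n] (g B : Matrix (Fin n) (Fin n) K) (c : Fin n → K)
    (hg : IsUnit g.det) : PP (phiA n g B) (phiF n g c) = 0 := by
  set e0 : Fin n → K := Pi.single 0 1 with he0
  set w : Fin n → K := g⁻¹ *ᵥ e0 with hwdef
  have hgw : g *ᵥ w = e0 := by
    rw [hwdef, Matrix.mulVec_mulVec, Matrix.mul_nonsing_inv _ hg, Matrix.one_mulVec]
  have hw : w ≠ 0 := by
    intro h0
    have h1 : e0 0 = 1 := by simp [he0]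
    rw [← hgw, h0, Matrix.mulVec_zero] at h1
    exact one_ne_zero h1.symm
  have hz : zmat n B *ᵥ e0 = B 0 0 • e0 := by
    rw [he0, Matrix.mulVec_single]
    funext i
    rcases eq_or_ne i 0 with rfl | hi
    · simp [zmat]
    · simp [zmat, hi, Pi.single_eq_of_ne hi]
  apply pp_zero_of_eigen _ _ w hw (B 0 0 * g.det)
  · have key : adjugate g *ᵥ (zmat n B *ᵥ (g *ᵥ w)) = phiA n g B *ᵥ w := by
      conv_lhs => rw [Matrix.mulVec_mulVec, Matrix.mulVec_mulVec]
      rw [phiA, Matrix.mul_assoc]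
    rw [← key, hgw, hz, Matrix.mulVec_smul, adjugate_eq_det_smul_inv g hg,
      Matrix.smul_mulVec, ← hwdef, smul_smul]
  · rw [phiF, ← Matrix.dotProduct_mulVec, hgw, he0, dotProduct_single]
    simp [zvec]

open MvPolynomial in
lemma aeval_eq_eval' {τ : Type*} (y : τ → K) (p : MvPolynomial τ K) :
    aeval y p = eval y p := by
  rw [MvPolynomial.aeval_def, ← MvPolynomial.eval₂_id]
  congr 1

open MvPolynomial in
lemma eval_aeval' {σ τ : Type*} (Φ : τ → MvPolynomial σ K) (x : σ → K)
    (r : MvPolynomial τ K) :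
    eval x (aeval Φ r) = eval (fun t => eval x (Φ t)) r := by
  calc eval x (aeval Φ r) = aeval x (aeval Φ r) := (aeval_eq_eval' _ _).symm
    _ = aeval (fun t => aeval x (Φ t)) r := comp_aeval_apply (f := Φ) (MvPolynomial.aeval x) r
    _ = eval (fun t => aeval x (Φ t)) r := aeval_eq_eval' _ _
    _ = eval (fun t => eval x (Φ t)) r := by
        rw [show (fun t => aeval x (Φ t)) = (fun t => eval x (Φ t)) from
          funext fun t => aeval_eq_eval' _ _]

open MvPolynomial in
lemma vanishing_range_prime [Infinite K] {σ τ : Type*} (Φ : τ → MvPolynomial σ K) :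
    (MvPolynomial.vanishingIdeal K
      (Set.range fun x : σ → K => fun t => eval x (Φ t))).IsPrime := by
  rw [Ideal.isPrime_iff]
  constructor
  · intro htop
    have h1 : (1 : MvPolynomial τ K) ∈ MvPolynomial.vanishingIdeal K
        (Set.range fun x : σ → K => fun t => eval x (Φ t)) := by
      rw [htop]; trivial
    have := MvPolynomial.mem_vanishingIdeal_iff.mp h1
      (fun t => eval (fun _ => (0 : K)) (Φ t)) ⟨fun _ => 0, rfl⟩
    simp at this
  · intro p q hpq
    have hvan : ∀ x : σ → K, eval (fun t => eval x (Φ t)) (p * q) = 0 := fun x => by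
      have := MvPolynomial.mem_vanishingIdeal_iff.mp hpq _ ⟨x, rfl⟩; rwa [aeval_eq_eval'] at this
    have h0 : aeval Φ p * aeval Φ q = 0 := by
      apply MvPolynomial.funext
      intro x
      rw [_root_.map_mul, map_zero, eval_aeval', eval_aeval', ← _root_.map_mul]
      exact hvan x
    rcases mul_eq_zero.mp h0 with h | h
    · left
      rw [MvPolynomial.mem_vanishingIdeal_iff]
      rintro y ⟨x, rfl⟩
      rw [aeval_eq_eval', ← eval_aeval', h, map_zero]
    · right
      rw [MvPolynomial.mem_vanishingIdeal_iff]
      rintro y ⟨x, rfl⟩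
      rw [aeval_eq_eval', ← eval_aeval', h, map_zero]

open MvPolynomial

variable (K n) in
noncomputable def Gg [NeZero n] :
    Matrix (Fin n) (Fin n) (MvPolynomial ((Fin n × Fin n) ⊕ ((Fin n × Fin n) ⊕ Fin n)) K) :=
  Matrix.of fun i j => X (Sum.inl (i, j))

variable (K n) in
noncomputable def GB [NeZero n] :
    Matrix (Fin n) (Fin n) (MvPolynomial ((Fin n × Fin n) ⊕ ((Fin n × Fin n) ⊕ Fin n)) K) :=
  Matrix.of fun i j => X (Sum.inr (Sum.inl (i, j)))

variable (K n) in
noncomputable def Gc [NeZero n] :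
    Fin n → MvPolynomial ((Fin n × Fin n) ⊕ ((Fin n × Fin n) ⊕ Fin n)) K :=
  fun i => X (Sum.inr (Sum.inr i))

variable (K n) in
noncomputable def Φgen [NeZero n] :
    ((Fin n × Fin n) ⊕ Fin n) → MvPolynomial ((Fin n × Fin n) ⊕ ((Fin n × Fin n) ⊕ Fin n)) K :=
  Sum.elim (fun p => phiA n (Gg K n) (GB K n) p.1 p.2) (phiF n (Gg K n) (Gc K n))

lemma Gg_map [NeZero n] (x : ((Fin n × Fin n) ⊕ ((Fin n × Fin n) ⊕ Fin n)) → K) :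
    (Gg K n).map (eval x) = Matrix.of fun i j => x (Sum.inl (i, j)) := by
  ext i j; simp [Gg]

lemma GB_map [NeZero n] (x : ((Fin n × Fin n) ⊕ ((Fin n × Fin n) ⊕ Fin n)) → K) :
    (GB K n).map (eval x) = Matrix.of fun i j => x (Sum.inr (Sum.inl (i, j))) := by
  ext i j; simp [GB]

lemma Gc_map [NeZero n] (x : ((Fin n × Fin n) ⊕ ((Fin n × Fin n) ⊕ Fin n)) → K) :
    (eval x) ∘ (Gc K n) = fun i => x (Sum.inr (Sum.inr i)) := by
  funext i; simp [Gc]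

lemma pp_gen_zero [Infinite K] [NeZero n] :
    PP (phiA n (Gg K n) (GB K n)) (phiF n (Gg K n) (Gc K n)) = 0 := by
  have hdet : (Gg K n).det ≠ 0 := by
    intro h0
    have := congrArg (eval (Sum.elim (fun p : Fin n × Fin n => if p.1 = p.2 then (1 : K) else 0)
      (fun _ => 0))) h0
    rw [← RingHom.coe_coe, RingHom.map_det, map_zero] at this
    simp only [RingHom.mapMatrix_apply, RingHom.coe_coe] at this
    have h1 : (Gg K n).map (eval (Sum.elim
        (fun p : Fin n × Fin n => if p.1 = p.2 then (1 : K) else 0) (fun _ => 0))) = 1 := by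
      ext i j
      simp [Gg, Matrix.one_apply]
    rw [h1, Matrix.det_one] at this
    exact one_ne_zero this
  have hmul : (Gg K n).det * PP (phiA n (Gg K n) (GB K n)) (phiF n (Gg K n) (Gc K n)) = 0 := by
    apply MvPolynomial.funext
    intro x
    rw [_root_.map_mul, map_zero]
    have e1 : (eval x) (PP (phiA n (Gg K n) (GB K n)) (phiF n (Gg K n) (Gc K n)))
        = PP ((phiA n (Gg K n) (GB K n)).map (eval x))
          ((eval x) ∘ (phiF n (Gg K n) (Gc K n))) := map_PP _ _ _
    have e2 : ((phiA n (Gg K n) (GB K n)).map (eval x))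
        = phiA n ((Gg K n).map (eval x)) ((GB K n).map (eval x)) := map_phiA _ _ _
    have e3 : ((eval x) ∘ (phiF n (Gg K n) (Gc K n)))
        = phiF n ((Gg K n).map (eval x)) ((eval x) ∘ (Gc K n)) :=
      funext fun i => map_phiF _ _ _ i
    have e4 : (eval x) (Gg K n).det = ((Gg K n).map (eval x)).det := by
      rw [← RingHom.coe_coe, RingHom.map_det]
      simp only [RingHom.mapMatrix_apply, RingHom.coe_coe]
    rw [e1, e2, e3, e4]
    set gx := (Gg K n).map (eval x)
    by_cases hg : IsUnit gx.det
    · rw [pp_phi_zero_of_unit _ _ _ hg, mul_zero]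
    · rw [isUnit_iff_ne_zero, not_not] at hg
      rw [hg, zero_mul]
  rcases mul_eq_zero.mp hmul with h | h
  · exact absurd h hdet
  · exact h

lemma range_eval (x : ((Fin n × Fin n) ⊕ ((Fin n × Fin n) ⊕ Fin n)) → K) [NeZero n] :
    (fun t => eval x (Φgen K n t))
      = Sum.elim
          (fun p : Fin n × Fin n => phiA n (Matrix.of fun i j => x (Sum.inl (i, j)))
            (Matrix.of fun i j => x (Sum.inr (Sum.inl (i, j)))) p.1 p.2)
          (phiF n (Matrix.of fun i j => x (Sum.inl (i, j)))
            (fun i => x (Sum.inr (Sum.inr i)))) := by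
  funext t
  cases t with
  | inl p =>
    show eval x (phiA n (Gg K n) (GB K n) p.1 p.2) = _
    have e2 := map_phiA (eval x : MvPolynomial _ K →+* K) (Gg K n) (GB K n)
    have : eval x (phiA n (Gg K n) (GB K n) p.1 p.2)
        = ((phiA n (Gg K n) (GB K n)).map (eval x)) p.1 p.2 := rfl
    rw [this, e2, Gg_map, GB_map, Sum.elim_inl]
  | inr i =>
    show eval x (phiF n (Gg K n) (Gc K n) i) = _
    rw [map_phiF (eval x : MvPolynomial _ K →+* K) (Gg K n) (Gc K n) i, Gg_map, Gc_map,
      Sum.elim_inr]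

lemma set_eq_range [IsAlgClosed K] [Infinite K] [NeZero n] (hn : 1 ≤ n) :
    {x : ((Fin n × Fin n) ⊕ Fin n) → K |
        PP (Matrix.of fun i j : Fin n => x (Sum.inl (i, j))) (fun i => x (Sum.inr i)) = 0}
      = Set.range (fun x : ((Fin n × Fin n) ⊕ ((Fin n × Fin n) ⊕ Fin n)) → K =>
          fun t => eval x (Φgen K n t)) := by
  ext y
  simp only [Set.mem_setOf_eq, Set.mem_range]
  constructor
  · intro hy
    set A : Matrix (Fin n) (Fin n) K := Matrix.of fun i j => y (Sum.inl (i, j)) with hA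
    set f : Fin n → K := fun i => y (Sum.inr i) with hf
    obtain ⟨w, hw, μ, hAw, hfw⟩ := exists_eigen_of_pp_zero hn A f hy
    obtain ⟨h, hdet, hcol⟩ := exists_unit_col w hw
    set g : Matrix (Fin n) (Fin n) K := h⁻¹ with hg
    have hdetg : IsUnit g.det := Matrix.isUnit_nonsing_inv_det h hdet
    have hhg : h * g = 1 := Matrix.mul_nonsing_inv h hdet
    have hgh : g * h = 1 := Matrix.nonsing_inv_mul h hdet
    set B : Matrix (Fin n) (Fin n) K := (g.det)⁻¹ • (g * A * h) with hB
    set c : Fin n → K := f ᵥ* h with hc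
    have hhw : h *ᵥ Pi.single (0 : Fin n) (1 : K) = w := by
      rw [Matrix.mulVec_single]
      funext i
      rw [MulOpposite.op_one, one_smul]
      exact congrFun hcol i
    have hgw : g *ᵥ w = Pi.single (0 : Fin n) (1 : K) := by
      rw [← hhw, Matrix.mulVec_mulVec, hgh, Matrix.one_mulVec]
    have hgAh : ∀ i : Fin n, i ≠ 0 → (g * A * h) i 0 = 0 := by
      intro i hi
      have h1 : (g * A * h) i 0 = ((g * A) *ᵥ w) i := by
        rw [← hcol]
        simp [Matrix.mul_apply, Matrix.mulVec, dotProduct]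
      rw [h1, ← Matrix.mulVec_mulVec, hAw, Matrix.mulVec_smul, hgw]
      simp [Pi.single_eq_of_ne hi]
    refine ⟨Sum.elim (fun p : Fin n × Fin n => g p.1 p.2) (Sum.elim (fun p : Fin n × Fin n => B p.1 p.2) c), ?_⟩
    rw [range_eval]
    have hGg : (Matrix.of fun i j : Fin n =>
        (Sum.elim (fun p : Fin n × Fin n => g p.1 p.2) (Sum.elim (fun p : Fin n × Fin n => B p.1 p.2) c)) (Sum.inl (i, j))) = g := by
      ext i j; rfl
    have hGB : (Matrix.of fun i j : Fin n =>
        (Sum.elim (fun p : Fin n × Fin n => g p.1 p.2) (Sum.elim (fun p : Fin n × Fin n => B p.1 p.2) c)) (Sum.inr (Sum.inl (i, j)))) = B := by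
      ext i j; rfl
    have hGc : (fun i : Fin n =>
        (Sum.elim (fun p : Fin n × Fin n => g p.1 p.2) (Sum.elim (fun p : Fin n × Fin n => B p.1 p.2) c)) (Sum.inr (Sum.inr i))) = c := by
      funext i; rfl
    rw [hGg, hGB, hGc]
    have hzB : zmat n B = B := by
      ext i j
      simp only [zmat, Matrix.of_apply]
      split_ifs with hij
      · obtain ⟨rfl, hi⟩ := hij
        rw [hB]
        simp only [Matrix.smul_apply, smul_eq_mul]
        rw [hgAh i hi, mul_zero]
      · rfl
    have hadj : adjugate g = g.det • h := by
      rw [adjugate_eq_det_smul_inv g hdetg, hg, Matrix.nonsing_inv_nonsing_inv h hdet]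
    have hphiA : phiA n g B = A := by
      rw [phiA, hzB, hadj, hB, Matrix.smul_mul, Matrix.mul_smul, smul_smul,
        mul_inv_cancel₀ (isUnit_iff_ne_zero.mp hdetg), one_smul]
      rw [← Matrix.mul_assoc h (g * A) h, ← Matrix.mul_assoc h g A, hhg, Matrix.one_mul,
        Matrix.mul_assoc A h g, hhg, Matrix.mul_one]
    have hc0 : c 0 = 0 := by
      rw [hc]
      have : (f ᵥ* h) 0 = f ⬝ᵥ (fun i => h i 0) := rfl
      rw [this]
      have : (fun i => h i 0) = w := hcol
      rw [this, hfw]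
    have hphiF : phiF n g c = f := by
      rw [phiF]
      have hzc : zvec n c = c := by
        funext i
        simp only [zvec]
        split_ifs with hi
        · rw [hi, hc0]
        · rfl
      rw [hzc, hc, Matrix.vecMul_vecMul, hhg, Matrix.vecMul_one]
    funext t
    cases t with
    | inl p => rw [Sum.elim_inl, hphiA]; rfl
    | inr i => rw [Sum.elim_inr, hphiF]
  · rintro ⟨x, rfl⟩
    rw [range_eval]
    set gx : Matrix (Fin n) (Fin n) K := Matrix.of fun i j => x (Sum.inl (i, j))
    set Bx : Matrix (Fin n) (Fin n) K := Matrix.of fun i j => x (Sum.inr (Sum.inl (i, j)))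
    set cx : Fin n → K := fun i => x (Sum.inr (Sum.inr i))
    have hM : (Matrix.of fun i j : Fin n =>
        (Sum.elim (fun p : Fin n × Fin n => phiA n gx Bx p.1 p.2) (phiF n gx cx)) (Sum.inl (i, j)))
        = phiA n gx Bx := by ext i j; rfl
    have hF : (fun i : Fin n =>
        (Sum.elim (fun p : Fin n × Fin n => phiA n gx Bx p.1 p.2) (phiF n gx cx)) (Sum.inr i))
        = phiF n gx cx := by funext i; rfl
    rw [hM, hF]
    have := congrArg (eval x : MvPolynomial _ K →+* K) (pp_gen_zero (K := K) (n := n))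
    rw [map_zero, map_PP, map_phiA, Gg_map, GB_map] at this
    have e3 : ((eval x) ∘ (phiF n (Gg K n) (Gc K n)))
        = phiF n ((Gg K n).map (eval x)) ((eval x) ∘ (Gc K n)) :=
      funext fun i => map_phiF _ _ _ i
    rw [e3, Gg_map, Gc_map] at this
    exact this

end Stmt12

/-- (`k` algebraically closed of characteristic 0) the zero locus
`Z = {(A,f) : P(A,f) = 0}` in affine `(n² + n)`-space is irreducible; equivalently, its
vanishing ideal in the polynomial ring in the entries of `A` and `f` is prime. -/
theorem stmt_12 {K : Type*} [Field K] [IsAlgClosed K] [CharZero K] {n : ℕ} (hn : 1 ≤ n) :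
    (MvPolynomial.vanishingIdeal K
      {x : ((Fin n × Fin n) ⊕ Fin n) → K |
        PP (Matrix.of fun i j : Fin n => x (Sum.inl (i, j))) (fun i => x (Sum.inr i)) = 0}).IsPrime := by
  haveI : NeZero n := ⟨by omega⟩
  rw [Stmt12.set_eq_range hn]
  exact Stmt12.vanishing_range_prime _
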